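/- Let H be a Hermitian operator on a finite-dimensional complex Hilbert space with spectral decomposition H = ∑_{μ∈ι} E_μ P_μ, let S ⊆ ι, P = ∑_{μ∈S} P_μ, and let γ > 0 be such that |E_μ − E_ν| ≥ γ for all μ ∈ S and ν ∉ S. Let w : ℝ → ℂ be measurable with ∫_ℝ |w(t)|(1+|t|) dt < ∞, ∫_ℝ w(t) dt = 1, and ∫_ℝ w(t) e^{−iλt} dt = 0 whenever |λ| ≥ γ, and set I_H(A) = ∫_ℝ w(t) (∫_0^t τ^H_s(A) ds) dt. If an operator A satisfies A = P A (1−P) or A = (1−P) A P, then for every β > 0, ‖I_{H,β}(A) − I_H(A)‖ ≤ Tr(P)·‖A‖·γ^{−1}·e^{−γ²/(4β²)}. -/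

import Mathlib

open MeasureTheory Real

/-- The Heisenberg time evolution `τ^H_s(A) = e^{isH} A e^{-isH}`. -/
noncomputable def heis {V : Type*} [NormedAddCommGroup V] [NormedSpace ℂ V]
    (H : V →L[ℂ] V) (s : ℝ) (A : V →L[ℂ] V) : V →L[ℂ] V :=
  NormedSpace.exp ((Complex.I * (s : ℂ)) • H) * A *
    NormedSpace.exp ((-(Complex.I * (s : ℂ))) • H)

/-- The Gaussian filter `φ_β(t) = (β/√π) e^{-β²t²}`. -/
noncomputable def phi (β t : ℝ) : ℝ := (β / Real.sqrt π) * Real.exp (-(β ^ 2 * t ^ 2))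

/-- The almost inverse Liouvillian `I_{H,β}(A) = ∫ φ_β(t) (∫_0^t τ^H_s(A) ds) dt`. -/
noncomputable def aiL {V : Type*} [NormedAddCommGroup V] [NormedSpace ℂ V]
    (H : V →L[ℂ] V) (β : ℝ) (A : V →L[ℂ] V) : V →L[ℂ] V :=
  ∫ t : ℝ, phi β t • (∫ s in (0:ℝ)..t, heis H s A)

/-- The (exact) inverse Liouvillian associated with a weight function `w`,
`I_H(A) = ∫ w(t) (∫_0^t τ^H_s(A) ds) dt`. -/
noncomputable def invL {V : Type*} [NormedAddCommGroup V] [NormedSpace ℂ V]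
    (H : V →L[ℂ] V) (w : ℝ → ℂ) (A : V →L[ℂ] V) : V →L[ℂ] V :=
  ∫ t : ℝ, w t • (∫ s in (0:ℝ)..t, heis H s A)

/-! ### Auxiliary scalar lemmas -/

/-- The scalar kernel `(e^{ilt} - 1)/(il)`. -/
noncomputable def eF (l : ℝ) (t : ℝ) : ℂ :=
  (Complex.exp (Complex.I * (l : ℂ) * (t : ℂ)) - 1) / (Complex.I * (l : ℂ))

/-- The coefficient appearing in the difference `aiL - invL`. -/
noncomputable def dCoef (γ β l : ℝ) : ℂ :=
  if γ ≤ |l| then ((Real.exp (-(l^2/(4*β^2)))) : ℂ) / (Complex.I * (l:ℂ)) else 0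

theorem eF_integral (l : ℝ) (hl : l ≠ 0) (t : ℝ) :
    (∫ s in (0:ℝ)..t, Complex.exp (Complex.I * (l:ℂ) * (s:ℂ))) = eF l t := by
  have hc : (Complex.I * (l:ℂ)) ≠ 0 := by
    simp [Complex.I_ne_zero, Complex.ofReal_eq_zero, hl]
  rw [integral_exp_mul_complex hc, eF]
  simp [mul_assoc]

theorem eF_norm_le (l : ℝ) (hl : l ≠ 0) (t : ℝ) : ‖eF l t‖ ≤ |t| := by
  rw [← eF_integral l hl t]
  have := intervalIntegral.norm_integral_le_of_norm_le_const
    (C := 1) (f := fun s : ℝ => Complex.exp (Complex.I * (l:ℂ) * (s:ℂ)))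
    (a := 0) (b := t) ?_
  · simpa using this
  · intro x _
    rw [Complex.norm_exp]
    simp [mul_assoc]

theorem cont_eF (l : ℝ) : Continuous (eF l) := by
  unfold eF
  exact ((Complex.continuous_exp.comp
    (continuous_const.mul Complex.continuous_ofReal)).sub continuous_const).div_const _

theorem phi_eq (β t : ℝ) : phi β t = (β / Real.sqrt π) * Real.exp (-(β^2) * t^2) := by
  simp only [phi]; ring_nf

theorem phi_nonneg {β : ℝ} (hβ : 0 < β) (t : ℝ) : 0 ≤ phi β t := by
  rw [phi_eq]; positivity

theorem int_phi {β : ℝ} (hβ : 0 < β) : Integrable (phi β) := by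
  have : Integrable fun t : ℝ => Real.exp (-(β^2) * t^2) :=
    integrable_exp_neg_mul_sq (by positivity)
  have h2 := this.const_mul (β / Real.sqrt π)
  exact h2.congr (Filter.Eventually.of_forall fun t => (phi_eq β t).symm)

theorem sqrt_pi_div {β : ℝ} (hβ : 0 < β) : Real.sqrt (π / β^2) = Real.sqrt π / β := by
  rw [Real.sqrt_div (le_of_lt pi_pos), Real.sqrt_sq hβ.le]

theorem gauss_one {β : ℝ} (hβ : 0 < β) : ∫ t : ℝ, phi β t = 1 := by
  simp_rw [phi_eq]
  rw [integral_const_mul, integral_gaussian, sqrt_pi_div hβ]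
  have h1 : Real.sqrt π ≠ 0 := by positivity
  field_simp

theorem gauss_fourier {β : ℝ} (hβ : 0 < β) (l : ℝ) :
    ∫ t : ℝ, (phi β t : ℂ) * Complex.exp (Complex.I * (l:ℂ) * (t:ℂ))
      = ((Real.exp (-(l^2/(4*β^2)))) : ℂ) := by
  have hb : (0:ℝ) < ((β:ℂ)^2).re := by
    rw [show ((β:ℂ)^2) = ((β^2 : ℝ) : ℂ) by push_cast; ring, Complex.ofReal_re]
    positivity
  have key := fourierIntegral_gaussian (b := (β:ℂ)^2) hb (l:ℂ)
  have h : ∀ t : ℝ, (phi β t : ℂ) * Complex.exp (Complex.I * (l:ℂ) * (t:ℂ))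
      = ((β / Real.sqrt π : ℝ) : ℂ) *
        (Complex.exp (Complex.I * (l:ℂ) * (t:ℂ)) * Complex.exp (-(β:ℂ)^2 * (t:ℂ)^2)) := by
    intro t
    simp only [phi]
    push_cast
    rw [mul_comm (Complex.exp _) (Complex.exp _), ← mul_assoc]
    congr 2
    ring_nf
  simp_rw [h]
  rw [integral_const_mul, key]
  have hπ : (0:ℝ) ≤ π / β^2 := by positivity
  have hcpow : ((π:ℂ) / (β:ℂ)^2) ^ (1/2 : ℂ) = ((Real.sqrt (π / β^2) : ℝ) : ℂ) := by
    rw [show ((π:ℂ) / (β:ℂ)^2) = (((π / β^2 : ℝ)) : ℂ) by push_cast; ring,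
      show ((1/2 : ℂ)) = (((1/2 : ℝ)) : ℂ) by norm_num,
      ← Complex.ofReal_cpow hπ, ← Real.sqrt_eq_rpow]
  rw [hcpow, sqrt_pi_div hβ]
  have h2 : (-(l:ℂ)^2 / (4 * (β:ℂ)^2)) = ((-(l^2/(4*β^2)) : ℝ) : ℂ) := by push_cast; ring
  rw [h2, ← Complex.ofReal_exp]
  have h1 : Real.sqrt π ≠ 0 := by positivity
  have hβ' : (β:ℝ) ≠ 0 := hβ.ne'
  rw [← Complex.ofReal_mul, ← Complex.ofReal_mul]
  congr 1
  field_simp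

theorem int_phiC {β : ℝ} (hβ : 0 < β) : Integrable fun t : ℝ => ((phi β t : ℝ) : ℂ) :=
  (int_phi hβ).ofReal

theorem int_phi_exp {β : ℝ} (hβ : 0 < β) (l : ℝ) :
    Integrable fun t : ℝ => (phi β t : ℂ) * Complex.exp (Complex.I * (l:ℂ) * (t:ℂ)) := by
  refine (int_phi hβ).mono' ?_ (Filter.Eventually.of_forall fun t => ?_)
  · exact (Complex.continuous_ofReal.comp (by
      rw [show phi β = fun t => (β / Real.sqrt π) * Real.exp (-(β^2) * t^2) from
        funext (phi_eq β)]
      continuity)).mul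
      (Complex.continuous_exp.comp (continuous_const.mul Complex.continuous_ofReal))
      |>.aestronglyMeasurable
  · have hre : (Complex.I * (l:ℂ) * (t:ℂ)).re = 0 := by simp [mul_assoc]
    rw [norm_mul, Complex.norm_exp, hre,
      Complex.norm_real, Real.norm_eq_abs, abs_of_nonneg (phi_nonneg hβ t)]
    simp

theorem int_phi_abs {β : ℝ} (hβ : 0 < β) : Integrable fun t : ℝ => phi β t * |t| := by
  have h := ((integrable_rpow_mul_exp_neg_mul_sq (b := β^2) (by positivity)
    (s := 1) (by norm_num)).abs).const_mul (β / Real.sqrt π)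
  refine h.congr (Filter.Eventually.of_forall fun t => ?_)
  simp only [Real.rpow_one, abs_mul, abs_of_pos (Real.exp_pos _), phi_eq]
  ring

theorem int_phi_eF {β : ℝ} (hβ : 0 < β) {l : ℝ} (hl : l ≠ 0) :
    Integrable fun t : ℝ => (phi β t : ℂ) * eF l t := by
  refine (int_phi_abs hβ).mono' ?_ (Filter.Eventually.of_forall fun t => ?_)
  · exact ((Complex.continuous_ofReal.comp (by
      rw [show phi β = fun t => (β / Real.sqrt π) * Real.exp (-(β^2) * t^2) from
        funext (phi_eq β)]
      continuity)).mul (cont_eF l)).aestronglyMeasurable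
  · rw [norm_mul]
    have h1 : ‖((phi β t : ℝ) : ℂ)‖ = phi β t := by
      simp [abs_of_nonneg (phi_nonneg hβ t)]
    rw [h1]
    exact mul_le_mul_of_nonneg_left (eF_norm_le l hl t) (phi_nonneg hβ t)

theorem int_w {w : ℝ → ℂ} (hwmeas : Measurable w)
    (hwint : Integrable (fun t : ℝ => ‖w t‖ * (1 + |t|))) : Integrable w := by
  refine hwint.mono' hwmeas.aestronglyMeasurable (Filter.Eventually.of_forall fun t => ?_)
  nlinarith [norm_nonneg (w t), abs_nonneg t]

theorem int_w_exp {w : ℝ → ℂ} (hwmeas : Measurable w)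
    (hwint : Integrable (fun t : ℝ => ‖w t‖ * (1 + |t|))) (l : ℝ) :
    Integrable fun t : ℝ => w t * Complex.exp (Complex.I * (l:ℂ) * (t:ℂ)) := by
  refine hwint.mono' ?_ (Filter.Eventually.of_forall fun t => ?_)
  · exact (hwmeas.aestronglyMeasurable.mul
      (Complex.continuous_exp.comp
        (continuous_const.mul Complex.continuous_ofReal)).aestronglyMeasurable)
  · have hre : (Complex.I * (l:ℂ) * (t:ℂ)).re = 0 := by simp [mul_assoc]
    simp only [norm_mul, Complex.norm_exp, hre, Real.exp_zero, mul_one]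
    nlinarith [norm_nonneg (w t), abs_nonneg t]

theorem int_w_eF {w : ℝ → ℂ} (hwmeas : Measurable w)
    (hwint : Integrable (fun t : ℝ => ‖w t‖ * (1 + |t|)))
    {l : ℝ} (hl : l ≠ 0) : Integrable fun t : ℝ => w t * eF l t := by
  refine hwint.mono' ?_ (Filter.Eventually.of_forall fun t => ?_)
  · exact hwmeas.aestronglyMeasurable.mul (cont_eF l).aestronglyMeasurable
  · rw [norm_mul]
    calc ‖w t‖ * ‖eF l t‖ ≤ ‖w t‖ * |t| :=
          mul_le_mul_of_nonneg_left (eF_norm_le l hl t) (norm_nonneg _)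
      _ ≤ ‖w t‖ * (1 + |t|) := by nlinarith [norm_nonneg (w t), abs_nonneg t]

theorem J1 {β : ℝ} (hβ : 0 < β) {l : ℝ} (hl : l ≠ 0) :
    ∫ t : ℝ, (phi β t : ℂ) * eF l t
      = (((Real.exp (-(l^2/(4*β^2)))) : ℂ) - 1) / (Complex.I * (l:ℂ)) := by
  have h : ∀ t : ℝ, (phi β t : ℂ) * eF l t
      = ((phi β t : ℂ) * Complex.exp (Complex.I * (l:ℂ) * (t:ℂ)) - (phi β t : ℂ))
        * (Complex.I * (l:ℂ))⁻¹ := by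
    intro t; rw [eF]; field_simp
  simp_rw [h]
  rw [integral_mul_const, integral_sub (int_phi_exp hβ l) (int_phiC hβ),
    gauss_fourier hβ l,
    show (∫ t : ℝ, ((phi β t : ℝ) : ℂ)) = ((1:ℝ):ℂ) from by
      rw [← gauss_one hβ]; exact integral_ofReal]
  norm_num [div_eq_mul_inv]

theorem J2 {w : ℝ → ℂ} (hwmeas : Measurable w)
    (hwint : Integrable (fun t : ℝ => ‖w t‖ * (1 + |t|)))
    (hwone : ∫ t : ℝ, w t = 1)
    {γ : ℝ} (hγ : 0 < γ)
    (hwfour : ∀ l : ℝ, γ ≤ |l| →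
      ∫ t : ℝ, w t * Complex.exp (-(Complex.I * (l : ℂ) * (t : ℂ))) = 0)
    {l : ℝ} (hl : γ ≤ |l|) :
    ∫ t : ℝ, w t * eF l t = (0 - 1) / (Complex.I * (l:ℂ)) := by
  have hl0 : l ≠ 0 := by intro h; rw [h] at hl; simp at hl; linarith
  have h : ∀ t : ℝ, w t * eF l t
      = (w t * Complex.exp (Complex.I * (l:ℂ) * (t:ℂ)) - w t)
        * (Complex.I * (l:ℂ))⁻¹ := by
    intro t; rw [eF]; field_simp
  simp_rw [h]
  rw [integral_mul_const, integral_sub (int_w_exp hwmeas hwint l) (int_w hwmeas hwint), hwone]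
  have h4 := hwfour (-l) (by rwa [abs_neg])
  have heq : ∀ t : ℝ, w t * Complex.exp (-(Complex.I * ((-l : ℝ):ℂ) * (t:ℂ)))
      = w t * Complex.exp (Complex.I * (l:ℂ) * (t:ℂ)) := by
    intro t; congr 1; push_cast; ring_nf
  rw [← div_eq_mul_inv]
  rw [show (∫ t : ℝ, w t * Complex.exp (Complex.I * (l:ℂ) * (t:ℂ))) = 0 from by
    rw [← h4]; exact integral_congr_ae (Filter.Eventually.of_forall fun t => (heq t).symm)]

theorem dCoef_norm_le {γ β : ℝ} (hγ : 0 < γ) (hβ : 0 < β) (l : ℝ) :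
    ‖dCoef γ β l‖ ≤ γ⁻¹ * Real.exp (-(γ^2/(4*β^2))) := by
  have hC : 0 ≤ γ⁻¹ * Real.exp (-(γ^2/(4*β^2))) := by positivity
  rw [dCoef]
  split_ifs with hcond
  · have hl0 : 0 < |l| := lt_of_lt_of_le hγ hcond
    have h2 : γ^2 ≤ l^2 := by nlinarith [abs_nonneg l, sq_abs l]
    rw [norm_div, norm_mul,
      Complex.norm_I, Complex.norm_real, Complex.norm_real, one_mul, Real.norm_eq_abs, Real.norm_eq_abs,
      abs_of_pos (Real.exp_pos _), inv_mul_eq_div]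
    have h1 : Real.exp (-(l^2/(4*β^2))) ≤ Real.exp (-(γ^2/(4*β^2))) := by
      apply Real.exp_le_exp.mpr
      rw [neg_le_neg_iff]
      gcongr
    exact div_le_div₀ (Real.exp_pos _).le h1 hγ hcond
  · simpa using hC

/-! ### Algebraic spectral lemmas -/

section alg
variable {V : Type*} [NormedAddCommGroup V] [InnerProductSpace ℂ V] [FiniteDimensional ℂ V]
    {ι : Type*} [Fintype ι] {Pr : ι → (V →L[ℂ] V)}

theorem mulSum (hPidem : ∀ μ, Pr μ * Pr μ = Pr μ)
    (hPorth : ∀ μ ν, μ ≠ ν → Pr μ * Pr ν = 0) (a b : ι → ℂ) :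
    (∑ μ, a μ • Pr μ) * (∑ μ, b μ • Pr μ) = ∑ μ, (a μ * b μ) • Pr μ := by
  rw [Finset.sum_mul_sum]
  refine Finset.sum_congr rfl (fun μ _ => ?_)
  rw [Finset.sum_eq_single μ]
  · rw [smul_mul_assoc, mul_smul_comm, hPidem, smul_smul]
  · intro ν _ hν
    rw [smul_mul_assoc, mul_smul_comm, hPorth μ ν (Ne.symm hν), smul_zero, smul_zero]
  · intro h; exact absurd (Finset.mem_univ μ) h

theorem powSum (hPidem : ∀ μ, Pr μ * Pr μ = Pr μ)
    (hPorth : ∀ μ ν, μ ≠ ν → Pr μ * Pr ν = 0) (hPsum : ∑ μ, Pr μ = 1)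
    (a : ι → ℂ) (n : ℕ) :
    (∑ μ, a μ • Pr μ) ^ n = ∑ μ, (a μ ^ n) • Pr μ := by
  induction n with
  | zero => simp [hPsum]
  | succ n ih =>
      rw [pow_succ, ih, mulSum hPidem hPorth]
      exact Finset.sum_congr rfl fun μ _ => by rw [← pow_succ]

theorem expSum (hPidem : ∀ μ, Pr μ * Pr μ = Pr μ)
    (hPorth : ∀ μ ν, μ ≠ ν → Pr μ * Pr ν = 0) (hPsum : ∑ μ, Pr μ = 1)
    (a : ι → ℂ) :
    NormedSpace.exp (∑ μ, a μ • Pr μ) = ∑ μ, Complex.exp (a μ) • Pr μ := by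
  rw [NormedSpace.exp_eq_tsum (𝕂 := ℂ)]
  have h1 : ∀ n : ℕ, (((n.factorial : ℂ))⁻¹ • (∑ μ, a μ • Pr μ) ^ n)
      = ∑ μ, (((n.factorial : ℂ))⁻¹ • a μ ^ n) • Pr μ := by
    intro n
    rw [powSum hPidem hPorth hPsum, Finset.smul_sum]
    exact Finset.sum_congr rfl fun μ _ => (smul_smul _ _ _)
  simp_rw [h1]
  rw [Summable.tsum_finsetSum (fun μ _ => ((NormedSpace.expSeries_summable' (𝕂 := ℂ) (a μ)).smul_const (Pr μ)))]
  refine Finset.sum_congr rfl fun μ _ => ?_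
  rw [Summable.tsum_smul_const (NormedSpace.expSeries_summable' (𝕂 := ℂ) (a μ))]
  congr 1
  rw [Complex.exp_eq_exp_ℂ, NormedSpace.exp_eq_tsum (𝕂 := ℂ)]

theorem tripleProd (a b : ι → ℂ) (A : V →L[ℂ] V) :
    (∑ μ, a μ • Pr μ) * A * (∑ ν, b ν • Pr ν)
      = ∑ μ, ∑ ν, (a μ * b ν) • (Pr μ * A * Pr ν) := by
  rw [Finset.sum_mul, Finset.sum_mul]
  refine Finset.sum_congr rfl fun μ _ => ?_
  rw [Finset.mul_sum]
  refine Finset.sum_congr rfl fun ν _ => ?_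
  rw [smul_mul_assoc, smul_mul_assoc, mul_smul_comm, smul_smul]

theorem heisEq (hPidem : ∀ μ, Pr μ * Pr μ = Pr μ)
    (hPorth : ∀ μ ν, μ ≠ ν → Pr μ * Pr ν = 0) (hPsum : ∑ μ, Pr μ = 1)
    (E : ι → ℝ) (H : V →L[ℂ] V) (hH : H = ∑ μ, (E μ : ℂ) • Pr μ)
    (s : ℝ) (A : V →L[ℂ] V) :
    heis H s A = ∑ μ, ∑ ν,
      Complex.exp (Complex.I * (((E μ : ℂ) - (E ν : ℂ))) * s) • (Pr μ * A * Pr ν) := by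
  have h1 : (Complex.I * (s : ℂ)) • H = ∑ μ, (Complex.I * s * E μ) • Pr μ := by
    rw [hH, Finset.smul_sum]; exact Finset.sum_congr rfl fun μ _ => by rw [smul_smul]
  have h2 : (-(Complex.I * (s : ℂ))) • H = ∑ μ, (-(Complex.I * s * E μ)) • Pr μ := by
    rw [hH, Finset.smul_sum]
    exact Finset.sum_congr rfl fun μ _ => by rw [smul_smul]; ring_nf
  rw [heis, h1, h2, expSum hPidem hPorth hPsum, expSum hPidem hPorth hPsum, tripleProd]
  refine Finset.sum_congr rfl fun μ _ => Finset.sum_congr rfl fun ν _ => ?_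
  rw [← Complex.exp_add]
  ring_nf

theorem Fform (hPidem : ∀ μ, Pr μ * Pr μ = Pr μ)
    (hPorth : ∀ μ ν, μ ≠ ν → Pr μ * Pr ν = 0) (hPsum : ∑ μ, Pr μ = 1)
    (E : ι → ℝ) (H : V →L[ℂ] V) (hH : H = ∑ μ, (E μ : ℂ) • Pr μ)
    (γ : ℝ) (hγ : 0 < γ) (A : V →L[ℂ] V)
    (hQ : ∀ μ ν, Pr μ * A * Pr ν ≠ 0 → γ ≤ |E μ - E ν|) (t : ℝ) :
    (∫ s in (0:ℝ)..t, heis H s A)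
      = ∑ p ∈ Finset.univ ×ˢ (Finset.univ : Finset ι),
          (if γ ≤ |E p.1 - E p.2| then eF (E p.1 - E p.2) t else 0) • (Pr p.1 * A * Pr p.2) := by
  have hcont : ∀ μ ν : ι, Continuous (fun s : ℝ =>
      Complex.exp (Complex.I * (((E μ : ℂ) - (E ν : ℂ))) * s) • (Pr μ * A * Pr ν)) := by
    intro μ ν
    exact (Complex.continuous_exp.comp
      (continuous_const.mul Complex.continuous_ofReal)).smul continuous_const
  simp_rw [heisEq hPidem hPorth hPsum E H hH _ A, ← Finset.sum_product']
  rw [intervalIntegral.integral_finset_sum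
    (f := fun (p : ι × ι) (s : ℝ) =>
      Complex.exp (Complex.I * (((E p.1 : ℂ) - (E p.2 : ℂ))) * s) • (Pr p.1 * A * Pr p.2))
    (fun p _ => (hcont p.1 p.2).intervalIntegrable (0:ℝ) t)]
  refine Finset.sum_congr rfl fun p _ => ?_
  obtain ⟨μ, ν⟩ := p
  rw [intervalIntegral.integral_smul_const]
  by_cases hQ0 : Pr μ * A * Pr ν = 0
  · rw [hQ0, smul_zero, smul_zero]
  · have hγl := hQ μ ν hQ0
    rw [if_pos hγl]
    congr 1
    have hl : E μ - E ν ≠ 0 := by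
      intro h; rw [h] at hγl; simp at hγl; linarith
    have := eF_integral (E μ - E ν) hl t
    rw [← this]
    norm_num
end alg

/-! ### Hilbert space norm and trace lemmas -/

section hilbert
variable {V : Type*} [NormedAddCommGroup V] [InnerProductSpace ℂ V] [FiniteDimensional ℂ V]

local notation "⟪" x ", " y "⟫" => @inner ℂ V _ x y

theorem swap_inner_sa {q : V →L[ℂ] V} (hsa : IsSelfAdjoint q) (a b : V) :
    ⟪q a, b⟫ = ⟪a, q b⟫ := by
  have hadj := ContinuousLinearMap.isSelfAdjoint_iff'.mp hsa
  conv_lhs => rw [← hadj]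
  exact ContinuousLinearMap.adjoint_inner_left q b a

theorem sa_idem_apply_norm_le {q : V →L[ℂ] V} (hsa : IsSelfAdjoint q)
    (hid : q * q = q) (x : V) : ‖q x‖ ≤ ‖x‖ := by
  rcases eq_or_ne (q x) 0 with h | h
  · rw [h]; simp
  · have h1 : (‖q x‖ : ℝ) ^ 2 = RCLike.re ⟪q x, q x⟫ := (inner_self_eq_norm_sq (𝕜 := ℂ) _).symm
    have h2 : ⟪q x, q x⟫ = ⟪x, q x⟫ := by
      rw [swap_inner_sa hsa x (q x), ← ContinuousLinearMap.mul_apply, hid]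
    have h4 : ‖q x‖ ^ 2 ≤ ‖x‖ * ‖q x‖ := by rw [h1, h2]; exact re_inner_le_norm x (q x)
    have h5 : 0 < ‖q x‖ := norm_pos_iff.mpr h
    nlinarith

theorem sa_idem_norm_le {q : V →L[ℂ] V} (hsa : IsSelfAdjoint q)
    (hid : q * q = q) : ‖q‖ ≤ 1 :=
  ContinuousLinearMap.opNorm_le_bound _ zero_le_one fun x => by
    simpa using sa_idem_apply_norm_le hsa hid x

variable {ι : Type*} [Fintype ι] {Pr : ι → (V →L[ℂ] V)}

theorem sumProj_sa_idem (hPsa : ∀ μ, IsSelfAdjoint (Pr μ))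
    (hPidem : ∀ μ, Pr μ * Pr μ = Pr μ)
    (hPorth : ∀ μ ν, μ ≠ ν → Pr μ * Pr ν = 0) (s : Finset ι) :
    IsSelfAdjoint (∑ ν ∈ s, Pr ν) ∧ (∑ ν ∈ s, Pr ν) * (∑ ν ∈ s, Pr ν) = ∑ ν ∈ s, Pr ν := by
  constructor
  · exact Finset.sum_induction _ _ (fun a b ha hb => ha.add hb)
      (IsSelfAdjoint.zero _) (fun ν _ => hPsa ν)
  · rw [Finset.sum_mul_sum]
    refine Finset.sum_congr rfl fun μ hμ => ?_
    rw [Finset.sum_eq_single μ]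
    · exact hPidem μ
    · exact fun ν _ hν => hPorth μ ν (Ne.symm hν)
    · exact fun h => absurd hμ h

theorem sum_proj_apply_sq (hPsa : ∀ μ, IsSelfAdjoint (Pr μ))
    (hPidem : ∀ μ, Pr μ * Pr μ = Pr μ)
    (hPorth : ∀ μ ν, μ ≠ ν → Pr μ * Pr ν = 0) (s : Finset ι) (x : V) :
    ∑ ν ∈ s, ‖Pr ν x‖ ^ 2 ≤ ‖x‖ ^ 2 := by
  obtain ⟨hsa, hid⟩ := sumProj_sa_idem hPsa hPidem hPorth s
  have key : ∀ ν ∈ s, ‖Pr ν x‖ ^ 2 = RCLike.re ⟪x, Pr ν x⟫ := by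
    intro ν _
    rw [← inner_self_eq_norm_sq (𝕜 := ℂ)]
    congr 1
    rw [swap_inner_sa (hPsa ν) x (Pr ν x), ← ContinuousLinearMap.mul_apply, hPidem]
  rw [Finset.sum_congr rfl key]
  have h2 : ∑ ν ∈ s, RCLike.re ⟪x, Pr ν x⟫ = RCLike.re ⟪x, (∑ ν ∈ s, Pr ν) x⟫ := by
    rw [ContinuousLinearMap.sum_apply, inner_sum, map_sum]
  rw [h2]
  calc RCLike.re ⟪x, (∑ ν ∈ s, Pr ν) x⟫ ≤ ‖x‖ * ‖(∑ ν ∈ s, Pr ν) x‖ := re_inner_le_norm _ _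
    _ ≤ ‖x‖ * ‖x‖ := mul_le_mul_of_nonneg_left (sa_idem_apply_norm_le hsa hid x) (norm_nonneg _)
    _ = ‖x‖ ^ 2 := (sq ‖x‖).symm

theorem projSumNorm (hPsa : ∀ μ, IsSelfAdjoint (Pr μ))
    (hPidem : ∀ μ, Pr μ * Pr μ = Pr μ)
    (hPorth : ∀ μ ν, μ ≠ ν → Pr μ * Pr ν = 0) (s : Finset ι)
    (c : ι → ℂ) (C : ℝ) (hC : 0 ≤ C) (hc : ∀ ν ∈ s, ‖c ν‖ ≤ C) :
    ‖∑ ν ∈ s, c ν • Pr ν‖ ≤ C := by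
  refine ContinuousLinearMap.opNorm_le_bound _ hC fun x => ?_
  have horth : ∀ ν ∈ s, ∀ ν' ∈ s, ν' ≠ ν → ⟪Pr ν x, Pr ν' x⟫ = 0 := by
    intro ν _ ν' _ hne
    rw [swap_inner_sa (hPsa ν), ← ContinuousLinearMap.mul_apply, hPorth ν ν' hne.symm]
    simp
  have hpyth : ‖(∑ ν ∈ s, c ν • Pr ν) x‖ ^ 2 = ∑ ν ∈ s, ‖c ν‖^2 * ‖Pr ν x‖ ^ 2 := by
    rw [← inner_self_eq_norm_sq (𝕜 := ℂ), ContinuousLinearMap.sum_apply, sum_inner, map_sum]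
    refine Finset.sum_congr rfl fun ν hν => ?_
    rw [inner_sum, Finset.sum_eq_single ν]
    · simp only [ContinuousLinearMap.coe_smul', Pi.smul_apply]
      rw [inner_smul_left, inner_smul_right, ← mul_assoc, RCLike.conj_mul,
        inner_self_eq_norm_sq_to_K]
      rw [← RCLike.ofReal_pow, ← RCLike.ofReal_pow, ← RCLike.ofReal_mul, RCLike.ofReal_re]
    · intro ν' hν' hne
      simp only [ContinuousLinearMap.coe_smul', Pi.smul_apply]
      rw [inner_smul_left, inner_smul_right, horth ν hν ν' hν' hne]
      simp
    · exact fun h => absurd hν h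
  have hle : ‖(∑ ν ∈ s, c ν • Pr ν) x‖ ^ 2 ≤ C^2 * ‖x‖^2 := by
    rw [hpyth]
    calc ∑ ν ∈ s, ‖c ν‖^2 * ‖Pr ν x‖ ^ 2 ≤ ∑ ν ∈ s, C^2 * ‖Pr ν x‖ ^ 2 := by
          refine Finset.sum_le_sum fun ν hν => ?_
          have := hc ν hν
          have h0 : (0:ℝ) ≤ ‖c ν‖ := norm_nonneg _
          nlinarith [sq_nonneg ‖Pr ν x‖, sq_nonneg (C - ‖c ν‖), sq_nonneg (C + ‖c ν‖),
            mul_le_mul this this h0 hC]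
      _ = C^2 * ∑ ν ∈ s, ‖Pr ν x‖ ^ 2 := by rw [Finset.mul_sum]
      _ ≤ C^2 * ‖x‖^2 := mul_le_mul_of_nonneg_left
          (sum_proj_apply_sq hPsa hPidem hPorth s x) (by positivity)
  have hs := Real.sqrt_le_sqrt hle
  rw [Real.sqrt_sq (norm_nonneg _), show C^2 * ‖x‖^2 = (C*‖x‖)^2 by ring,
    Real.sqrt_sq (by positivity)] at hs
  exact hs

theorem trace_formula {κ : Type*} [Fintype κ] [DecidableEq κ] (b : OrthonormalBasis κ ℂ V)
    (f : V →L[ℂ] V) :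
    LinearMap.trace ℂ V (f : V →ₗ[ℂ] V) = ∑ i, ⟪b i, f (b i)⟫ := by
  rw [LinearMap.trace_eq_matrix_trace ℂ b.toBasis, Matrix.trace]
  refine Finset.sum_congr rfl fun i _ => ?_
  rw [Matrix.diag_apply, LinearMap.toMatrix_apply, b.coe_toBasis_repr_apply,
    b.repr_apply_apply, OrthonormalBasis.coe_toBasis]
  rfl

theorem trace_re_eq_sum {p : V →L[ℂ] V} (hsa : IsSelfAdjoint p) (hid : p * p = p)
    {κ : Type*} [Fintype κ] [DecidableEq κ] (b : OrthonormalBasis κ ℂ V) :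
    (LinearMap.trace ℂ V (p : V →ₗ[ℂ] V)).re = ∑ i, ‖p (b i)‖^2 := by
  rw [trace_formula b p, Complex.re_sum]
  refine Finset.sum_congr rfl fun i _ => ?_
  have h : ⟪b i, p (b i)⟫ = ⟪p (b i), p (b i)⟫ := by
    rw [swap_inner_sa hsa (b i) (p (b i)), ← ContinuousLinearMap.mul_apply, hid]
  rw [h, inner_self_eq_norm_sq_to_K]
  rw [← RCLike.ofReal_pow]
  exact RCLike.ofReal_re (K := ℂ) _

theorem trace_sa_idem {p : V →L[ℂ] V} (hsa : IsSelfAdjoint p) (hid : p * p = p) :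
    0 ≤ (LinearMap.trace ℂ V (p : V →ₗ[ℂ] V)).re ∧
      (p ≠ 0 → 1 ≤ (LinearMap.trace ℂ V (p : V →ₗ[ℂ] V)).re) := by
  classical
  constructor
  · rw [trace_re_eq_sum hsa hid (stdOrthonormalBasis ℂ V)]
    positivity
  · intro hp
    obtain ⟨y, hy⟩ : ∃ y, p y ≠ 0 := by
      by_contra h
      push_neg at h
      exact hp (ContinuousLinearMap.ext fun y => h y)
    set u : V := ‖p y‖⁻¹ • p y with hu
    have hpu : p u = u := by
      rw [hu]
      rw [show p ((‖p y‖⁻¹ : ℝ) • p y) = (‖p y‖⁻¹ : ℝ) • p (p y) from p.map_smul_of_tower _ _,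
        ← ContinuousLinearMap.mul_apply, hid]
    have hnu : ‖u‖ = 1 := by
      rw [hu, norm_smul, norm_inv, norm_norm, inv_mul_cancel₀ (norm_ne_zero_iff.mpr hy)]
    have horthset : Orthonormal ℂ ((↑) : ({u} : Set V) → V) := by
      rw [orthonormal_subtype_iff_ite]
      intro v hv v' hv'
      simp only [Set.mem_singleton_iff] at hv hv'
      subst hv; subst hv'
      simp [inner_self_eq_norm_sq_to_K, hnu]
    obtain ⟨s, b, hsub, hb⟩ := horthset.exists_orthonormalBasis_extension
    have hmem : u ∈ s := hsub rfl
    rw [trace_re_eq_sum hsa hid b]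
    have h1 : ‖p (b ⟨u, hmem⟩)‖^2 = 1 := by
      rw [hb]
      simp only
      rw [hpu, hnu]
      norm_num
    calc (1:ℝ) = ‖p (b ⟨u, hmem⟩)‖^2 := h1.symm
      _ ≤ ∑ i, ‖p (b i)‖^2 := Finset.single_le_sum
          (f := fun i : s => ‖p (b i)‖^2) (fun i _ => by positivity) (Finset.mem_univ _)

end hilbert

/-! ### The core identity -/

set_option synthInstance.maxHeartbeats 1000000
set_option maxHeartbeats 1600000

section core
variable {V : Type*} [NormedAddCommGroup V] [InnerProductSpace ℂ V] [FiniteDimensional ℂ V]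
    {ι : Type*} [Fintype ι] {Pr : ι → (V →L[ℂ] V)}

theorem aiL_eq (hPidem : ∀ μ, Pr μ * Pr μ = Pr μ)
    (hPorth : ∀ μ ν, μ ≠ ν → Pr μ * Pr ν = 0) (hPsum : ∑ μ, Pr μ = 1)
    (E : ι → ℝ) (H : V →L[ℂ] V) (hH : H = ∑ μ, (E μ : ℂ) • Pr μ)
    {γ : ℝ} (hγ : 0 < γ) (A : V →L[ℂ] V)
    (hQ : ∀ μ ν, Pr μ * A * Pr ν ≠ 0 → γ ≤ |E μ - E ν|) {β : ℝ} (hβ : 0 < β) :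
    aiL H β A = ∑ p ∈ Finset.univ ×ˢ (Finset.univ : Finset ι),
      (if γ ≤ |E p.1 - E p.2| then
        (((Real.exp (-((E p.1 - E p.2)^2/(4*β^2)))) : ℂ) - 1)
          / (Complex.I * ((E p.1 - E p.2 : ℝ):ℂ)) else 0) • (Pr p.1 * A * Pr p.2) := by
  have hlne : ∀ p : ι × ι, γ ≤ |E p.1 - E p.2| → E p.1 - E p.2 ≠ 0 := by
    intro p hc h
    rw [h] at hc; simp at hc; linarith
  have h1 : ∀ t : ℝ, phi β t • (∫ s in (0:ℝ)..t, heis H s A)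
      = ∑ p ∈ Finset.univ ×ˢ (Finset.univ : Finset ι),
          ((phi β t : ℂ) * (if γ ≤ |E p.1 - E p.2| then eF (E p.1 - E p.2) t else 0))
            • (Pr p.1 * A * Pr p.2) := by
    intro t
    rw [Fform hPidem hPorth hPsum E H hH γ hγ A hQ t, Finset.smul_sum]
    refine Finset.sum_congr rfl fun p _ => ?_
    rw [← algebraMap_smul ℂ (phi β t), smul_smul]
    rfl
  rw [aiL]
  simp_rw [h1]
  have hint : ∀ p : ι × ι, Integrable (fun t : ℝ =>
      ((phi β t : ℂ) * (if γ ≤ |E p.1 - E p.2| then eF (E p.1 - E p.2) t else 0))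
        • (Pr p.1 * A * Pr p.2)) := by
    intro p
    by_cases hc : γ ≤ |E p.1 - E p.2|
    · simp only [if_pos hc]
      exact (int_phi_eF hβ (hlne p hc)).smul_const _
    · simp only [if_neg hc, mul_zero, zero_smul]
      exact integrable_zero _ (V →L[ℂ] V) _
  rw [integral_finset_sum _ (fun p _ => hint p)]
  refine Finset.sum_congr rfl fun p _ => ?_
  rw [integral_smul_const]
  congr 1
  by_cases hc : γ ≤ |E p.1 - E p.2|
  · simp only [if_pos hc]
    exact J1 hβ (hlne p hc)
  · simp only [if_neg hc, mul_zero, integral_zero]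

theorem invL_eq (hPidem : ∀ μ, Pr μ * Pr μ = Pr μ)
    (hPorth : ∀ μ ν, μ ≠ ν → Pr μ * Pr ν = 0) (hPsum : ∑ μ, Pr μ = 1)
    (E : ι → ℝ) (H : V →L[ℂ] V) (hH : H = ∑ μ, (E μ : ℂ) • Pr μ)
    {γ : ℝ} (hγ : 0 < γ) (A : V →L[ℂ] V)
    (hQ : ∀ μ ν, Pr μ * A * Pr ν ≠ 0 → γ ≤ |E μ - E ν|)
    {w : ℝ → ℂ} (hwmeas : Measurable w)
    (hwint : Integrable (fun t : ℝ => ‖w t‖ * (1 + |t|)))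
    (hwone : ∫ t : ℝ, w t = 1)
    (hwfour : ∀ l : ℝ, γ ≤ |l| →
      ∫ t : ℝ, w t * Complex.exp (-(Complex.I * (l : ℂ) * (t : ℂ))) = 0) :
    invL H w A = ∑ p ∈ Finset.univ ×ˢ (Finset.univ : Finset ι),
      (if γ ≤ |E p.1 - E p.2| then
        ((0:ℂ) - 1) / (Complex.I * ((E p.1 - E p.2 : ℝ):ℂ)) else 0) • (Pr p.1 * A * Pr p.2) := by
  have hlne : ∀ p : ι × ι, γ ≤ |E p.1 - E p.2| → E p.1 - E p.2 ≠ 0 := by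
    intro p hc h
    rw [h] at hc; simp at hc; linarith
  have h1 : ∀ t : ℝ, w t • (∫ s in (0:ℝ)..t, heis H s A)
      = ∑ p ∈ Finset.univ ×ˢ (Finset.univ : Finset ι),
          (w t * (if γ ≤ |E p.1 - E p.2| then eF (E p.1 - E p.2) t else 0))
            • (Pr p.1 * A * Pr p.2) := by
    intro t
    rw [Fform hPidem hPorth hPsum E H hH γ hγ A hQ t, Finset.smul_sum]
    refine Finset.sum_congr rfl fun p _ => ?_
    rw [smul_smul]
  rw [invL]
  simp_rw [h1]
  have hint : ∀ p : ι × ι, Integrable (fun t : ℝ =>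
      (w t * (if γ ≤ |E p.1 - E p.2| then eF (E p.1 - E p.2) t else 0))
        • (Pr p.1 * A * Pr p.2)) := by
    intro p
    by_cases hc : γ ≤ |E p.1 - E p.2|
    · simp only [if_pos hc]
      exact (int_w_eF hwmeas hwint (hlne p hc)).smul_const _
    · simp only [if_neg hc, mul_zero, zero_smul]
      exact integrable_zero _ (V →L[ℂ] V) _
  rw [integral_finset_sum _ (fun p _ => hint p)]
  refine Finset.sum_congr rfl fun p _ => ?_
  rw [integral_smul_const]
  congr 1
  by_cases hc : γ ≤ |E p.1 - E p.2|
  · simp only [if_pos hc]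
    exact J2 hwmeas hwint hwone hγ hwfour hc
  · simp only [if_neg hc, mul_zero, integral_zero]

theorem coreEq (hPidem : ∀ μ, Pr μ * Pr μ = Pr μ)
    (hPorth : ∀ μ ν, μ ≠ ν → Pr μ * Pr ν = 0) (hPsum : ∑ μ, Pr μ = 1)
    (E : ι → ℝ) (H : V →L[ℂ] V) (hH : H = ∑ μ, (E μ : ℂ) • Pr μ)
    {γ : ℝ} (hγ : 0 < γ) (A : V →L[ℂ] V)
    (hQ : ∀ μ ν, Pr μ * A * Pr ν ≠ 0 → γ ≤ |E μ - E ν|)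
    {w : ℝ → ℂ} (hwmeas : Measurable w)
    (hwint : Integrable (fun t : ℝ => ‖w t‖ * (1 + |t|)))
    (hwone : ∫ t : ℝ, w t = 1)
    (hwfour : ∀ l : ℝ, γ ≤ |l| →
      ∫ t : ℝ, w t * Complex.exp (-(Complex.I * (l : ℂ) * (t : ℂ))) = 0)
    {β : ℝ} (hβ : 0 < β) :
    aiL H β A - invL H w A = ∑ p ∈ Finset.univ ×ˢ (Finset.univ : Finset ι),
      dCoef γ β (E p.1 - E p.2) • (Pr p.1 * A * Pr p.2) := by
  rw [aiL_eq hPidem hPorth hPsum E H hH hγ A hQ hβ,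
    invL_eq hPidem hPorth hPsum E H hH hγ A hQ hwmeas hwint hwone hwfour,
    ← Finset.sum_sub_distrib]
  refine Finset.sum_congr rfl fun p _ => ?_
  rw [← sub_smul]
  congr 1
  rw [dCoef]
  by_cases hc : γ ≤ |E p.1 - E p.2|
  · simp only [if_pos hc]
    rw [div_sub_div_same]
    congr 1
    ring
  · simp only [if_neg hc, sub_zero]

end core

theorem stmt9 {V : Type*} [NormedAddCommGroup V] [InnerProductSpace ℂ V]
    [FiniteDimensional ℂ V]
    {ι : Type*} [Fintype ι] (E : ι → ℝ) (Pr : ι → (V →L[ℂ] V))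
    (hPsa : ∀ μ, IsSelfAdjoint (Pr μ))
    (hPidem : ∀ μ, Pr μ * Pr μ = Pr μ)
    (hPorth : ∀ μ ν, μ ≠ ν → Pr μ * Pr ν = 0)
    (hPsum : ∑ μ, Pr μ = 1)
    (H : V →L[ℂ] V) (hH : H = ∑ μ, (E μ : ℂ) • Pr μ)
    (S : Finset ι) (P : V →L[ℂ] V) (hP : P = ∑ μ ∈ S, Pr μ)
    (γ : ℝ) (hγ : 0 < γ)
    (hgap : ∀ μ ∈ S, ∀ ν ∉ S, γ ≤ |E μ - E ν|)
    (w : ℝ → ℂ) (hwmeas : Measurable w)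
    (hwint : Integrable (fun t : ℝ => ‖w t‖ * (1 + |t|)))
    (hwone : ∫ t : ℝ, w t = 1)
    (hwfour : ∀ l : ℝ, γ ≤ |l| →
      ∫ t : ℝ, w t * Complex.exp (-(Complex.I * (l : ℂ) * (t : ℂ))) = 0)
    (A : V →L[ℂ] V) (hA : A = P * A * (1 - P) ∨ A = (1 - P) * A * P)
    (β : ℝ) (hβ : 0 < β) :
    ‖aiL H β A - invL H w A‖ ≤
      (LinearMap.trace ℂ V (P : V →ₗ[ℂ] V)).re * ‖A‖ * γ⁻¹ *
        Real.exp (-(γ ^ 2 / (4 * β ^ 2))) := by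
  classical
  set C : ℝ := γ⁻¹ * Real.exp (-(γ^2/(4*β^2))) with hCdef
  have hC : 0 ≤ C := by positivity
  have hAC : 0 ≤ ‖A‖ * C := mul_nonneg (norm_nonneg _) hC
  -- multiplication facts
  have hPmul : ∀ μ ∈ S, Pr μ * P = Pr μ := by
    intro μ hμ
    rw [hP, Finset.mul_sum, Finset.sum_eq_single_of_mem μ hμ
      (fun ν _ hν => hPorth μ ν (Ne.symm hν))]
    exact hPidem μ
  have hPmul0 : ∀ μ, μ ∉ S → Pr μ * P = 0 := by
    intro μ hμ
    rw [hP, Finset.mul_sum]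
    exact Finset.sum_eq_zero fun ν hν => hPorth μ ν (fun h => hμ (h ▸ hν))
  have hmulP : ∀ ν ∈ S, P * Pr ν = Pr ν := by
    intro ν hν
    rw [hP, Finset.sum_mul, Finset.sum_eq_single_of_mem ν hν
      (fun μ _ hμ => hPorth μ ν hμ)]
    exact hPidem ν
  have hmulP0 : ∀ ν, ν ∉ S → P * Pr ν = 0 := by
    intro ν hν
    rw [hP, Finset.sum_mul]
    exact Finset.sum_eq_zero fun μ hμ => hPorth μ ν (fun h => hν (h ▸ hμ))
  -- trace facts
  have htr : (LinearMap.trace ℂ V (P : V →ₗ[ℂ] V)).re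
      = ∑ μ ∈ S, (LinearMap.trace ℂ V ((Pr μ : V →L[ℂ] V) : V →ₗ[ℂ] V)).re := by
    rw [hP]
    rw [show (((∑ μ ∈ S, Pr μ : V →L[ℂ] V)) : V →ₗ[ℂ] V)
        = ∑ μ ∈ S, ((Pr μ : V →L[ℂ] V) : V →ₗ[ℂ] V) from by
      apply ContinuousLinearMap.coe_sum]
    rw [map_sum, Complex.re_sum]
  have hd : ∀ l : ℝ, ‖dCoef γ β l‖ ≤ C := fun l => dCoef_norm_le hγ hβ l
  rcases hA with hA1 | hA2
  · -- Case A = P A (1 - P)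
    have hQzero : ∀ μ ν, (μ ∉ S ∨ ν ∈ S) → Pr μ * A * Pr ν = 0 := by
      intro μ ν h
      have heq : Pr μ * A * Pr ν = (Pr μ * P) * A * ((1 - P) * Pr ν) := by
        conv_lhs => rw [hA1]
        simp only [mul_assoc]
      rcases h with h | h
      · rw [heq, hPmul0 μ h]; simp
      · have h2 : (1 - P) * Pr ν = 0 := by
          rw [sub_mul, one_mul, hmulP ν h, sub_self]
        rw [heq, h2]; simp
    have hQ : ∀ μ ν, Pr μ * A * Pr ν ≠ 0 → γ ≤ |E μ - E ν| := by
      intro μ ν hne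
      by_cases hμ : μ ∈ S
      · by_cases hν : ν ∈ S
        · exact absurd (hQzero μ ν (Or.inr hν)) hne
        · exact hgap μ hμ ν hν
      · exact absurd (hQzero μ ν (Or.inl hμ)) hne
    rw [coreEq hPidem hPorth hPsum E H hH hγ A hQ hwmeas hwint hwone hwfour hβ]
    have hsum : ∑ p ∈ Finset.univ ×ˢ (Finset.univ : Finset ι),
        dCoef γ β (E p.1 - E p.2) • (Pr p.1 * A * Pr p.2)
        = ∑ μ ∈ S, Pr μ * A *
            (∑ ν ∈ Finset.univ \ S, dCoef γ β (E μ - E ν) • Pr ν) := by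
      rw [Finset.sum_product' (f := fun μ ν => dCoef γ β (E μ - E ν) • (Pr μ * A * Pr ν))]
      rw [← Finset.sum_subset (Finset.subset_univ S) (fun μ _ hμ => Finset.sum_eq_zero
        (fun ν _ => by rw [hQzero μ ν (Or.inl hμ), smul_zero]))]
      refine Finset.sum_congr rfl fun μ hμ => ?_
      rw [← Finset.sum_subset (Finset.sdiff_subset (s := Finset.univ) (t := S))
        (fun ν _ hν => by
          have hνS : ν ∈ S := by simpa using hν
          rw [hQzero μ ν (Or.inr hνS), smul_zero])]
      rw [Finset.mul_sum]
      exact Finset.sum_congr rfl fun ν _ => (mul_smul_comm _ _ _).symm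
    rw [hsum]
    calc ‖∑ μ ∈ S, Pr μ * A * (∑ ν ∈ Finset.univ \ S, dCoef γ β (E μ - E ν) • Pr ν)‖
        ≤ ∑ μ ∈ S, ‖Pr μ * A * (∑ ν ∈ Finset.univ \ S, dCoef γ β (E μ - E ν) • Pr ν)‖ :=
          norm_sum_le _ _
      _ ≤ ∑ μ ∈ S, (LinearMap.trace ℂ V ((Pr μ : V →L[ℂ] V) : V →ₗ[ℂ] V)).re * (‖A‖ * C) := by
          refine Finset.sum_le_sum fun μ hμ => ?_
          obtain ⟨htr0, htr1⟩ := trace_sa_idem (hPsa μ) (hPidem μ)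
          by_cases h0 : Pr μ = 0
          · have hz : Pr μ * A * (∑ ν ∈ Finset.univ \ S, dCoef γ β (E μ - E ν) • Pr ν)
                = 0 := by rw [h0]; simp
            rw [hz, norm_zero]
            exact mul_nonneg htr0 hAC
          · have hR : ‖∑ ν ∈ Finset.univ \ S, dCoef γ β (E μ - E ν) • Pr ν‖ ≤ C :=
              projSumNorm hPsa hPidem hPorth _ _ C hC (fun ν _ => hd _)
            have hPn : ‖Pr μ‖ ≤ 1 := sa_idem_norm_le (hPsa μ) (hPidem μ)
            have h1 : ‖Pr μ * A * (∑ ν ∈ Finset.univ \ S, dCoef γ β (E μ - E ν) • Pr ν)‖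
                ≤ ‖Pr μ‖ * ‖A‖ * C := by
              calc ‖Pr μ * A * _‖ ≤ ‖Pr μ * A‖ * ‖_‖ := norm_mul_le _ _
                _ ≤ (‖Pr μ‖ * ‖A‖) * C := mul_le_mul (norm_mul_le _ _) hR (norm_nonneg _)
                    (mul_nonneg (norm_nonneg _) (norm_nonneg _))
            have h2 := htr1 h0
            nlinarith [norm_nonneg (Pr μ), norm_nonneg A]
      _ = (∑ μ ∈ S, (LinearMap.trace ℂ V ((Pr μ : V →L[ℂ] V) : V →ₗ[ℂ] V)).re) * (‖A‖ * C) :=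
          (Finset.sum_mul _ _ _).symm
      _ = (LinearMap.trace ℂ V (P : V →ₗ[ℂ] V)).re * ‖A‖ * γ⁻¹ *
          Real.exp (-(γ ^ 2 / (4 * β ^ 2))) := by
          rw [← htr, hCdef]; ring
  · -- Case A = (1 - P) A P
    have hQzero : ∀ μ ν, (μ ∈ S ∨ ν ∉ S) → Pr μ * A * Pr ν = 0 := by
      intro μ ν h
      have heq : Pr μ * A * Pr ν = (Pr μ * (1 - P)) * A * (P * Pr ν) := by
        conv_lhs => rw [hA2]
        simp only [mul_assoc]
      rcases h with h | h
      · have h2 : Pr μ * (1 - P) = 0 := by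
          rw [mul_sub, mul_one, hPmul μ h, sub_self]
        rw [heq, h2]; simp
      · rw [heq, hmulP0 ν h]; simp
    have hQ : ∀ μ ν, Pr μ * A * Pr ν ≠ 0 → γ ≤ |E μ - E ν| := by
      intro μ ν hne
      by_cases hν : ν ∈ S
      · by_cases hμ : μ ∈ S
        · exact absurd (hQzero μ ν (Or.inl hμ)) hne
        · rw [abs_sub_comm]
          exact hgap ν hν μ hμ
      · exact absurd (hQzero μ ν (Or.inr hν)) hne
    rw [coreEq hPidem hPorth hPsum E H hH hγ A hQ hwmeas hwint hwone hwfour hβ]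
    have hsum : ∑ p ∈ Finset.univ ×ˢ (Finset.univ : Finset ι),
        dCoef γ β (E p.1 - E p.2) • (Pr p.1 * A * Pr p.2)
        = ∑ ν ∈ S, (∑ μ ∈ Finset.univ \ S, dCoef γ β (E μ - E ν) • Pr μ) * A * Pr ν := by
      rw [Finset.sum_product' (f := fun μ ν => dCoef γ β (E μ - E ν) • (Pr μ * A * Pr ν))]
      rw [Finset.sum_comm]
      rw [← Finset.sum_subset (Finset.subset_univ S) (fun ν _ hν => Finset.sum_eq_zero
        (fun μ _ => by rw [hQzero μ ν (Or.inr hν), smul_zero]))]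
      refine Finset.sum_congr rfl fun ν hν => ?_
      rw [← Finset.sum_subset (Finset.sdiff_subset (s := Finset.univ) (t := S))
        (fun μ _ hμ => by
          have hμS : μ ∈ S := by simpa using hμ
          rw [hQzero μ ν (Or.inl hμS), smul_zero])]
      rw [Finset.sum_mul, Finset.sum_mul]
      exact Finset.sum_congr rfl fun μ _ => by
        rw [smul_mul_assoc, smul_mul_assoc]
    rw [hsum]
    calc ‖∑ ν ∈ S, (∑ μ ∈ Finset.univ \ S, dCoef γ β (E μ - E ν) • Pr μ) * A * Pr ν‖
        ≤ ∑ ν ∈ S, ‖(∑ μ ∈ Finset.univ \ S, dCoef γ β (E μ - E ν) • Pr μ) * A * Pr ν‖ :=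
          norm_sum_le _ _
      _ ≤ ∑ ν ∈ S, (LinearMap.trace ℂ V ((Pr ν : V →L[ℂ] V) : V →ₗ[ℂ] V)).re * (‖A‖ * C) := by
          refine Finset.sum_le_sum fun ν hν => ?_
          obtain ⟨htr0, htr1⟩ := trace_sa_idem (hPsa ν) (hPidem ν)
          by_cases h0 : Pr ν = 0
          · have hz : (∑ μ ∈ Finset.univ \ S, dCoef γ β (E μ - E ν) • Pr μ) * A * Pr ν
                = 0 := by rw [h0]; simp
            rw [hz, norm_zero]
            exact mul_nonneg htr0 hAC
          · have hR : ‖∑ μ ∈ Finset.univ \ S, dCoef γ β (E μ - E ν) • Pr μ‖ ≤ C :=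
              projSumNorm hPsa hPidem hPorth _ _ C hC (fun μ _ => hd _)
            have hPn : ‖Pr ν‖ ≤ 1 := sa_idem_norm_le (hPsa ν) (hPidem ν)
            have h1 : ‖(∑ μ ∈ Finset.univ \ S, dCoef γ β (E μ - E ν) • Pr μ) * A * Pr ν‖
                ≤ C * ‖A‖ * ‖Pr ν‖ :=
              (norm_mul_le _ _).trans (mul_le_mul_of_nonneg_right
                ((norm_mul_le _ _).trans
                  (mul_le_mul_of_nonneg_right hR (norm_nonneg A))) (norm_nonneg _))
            have h2 := htr1 h0
            nlinarith [norm_nonneg (Pr ν), norm_nonneg A]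
      _ = (∑ ν ∈ S, (LinearMap.trace ℂ V ((Pr ν : V →L[ℂ] V) : V →ₗ[ℂ] V)).re) * (‖A‖ * C) :=
          (Finset.sum_mul _ _ _).symm
      _ = (LinearMap.trace ℂ V (P : V →ₗ[ℂ] V)).re * ‖A‖ * γ⁻¹ *
          Real.exp (-(γ ^ 2 / (4 * β ^ 2))) := by
          rw [← htr, hCdef]; ring
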